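/- Let Z > 0, let σ_s, σ_t : (0,Z) → ℝ be measurable with σ_t essentially bounded, and suppose there is a constant c ≥ 0 such that 0 ≤ σ_s(z) ≤ c · σ_t(z) for almost every z ∈ (0,Z). For v square-integrable on (0,Z)×(−1,1), define the angular average (𝒫v)(z) = (1/2)∫_{−1}^{1} v(z,μ') dμ'. Then 0 ≤ ∫₀^Z ∫_{−1}^{1} σ_s(z) (𝒫v)(z) · v(z,μ) dμ dz ≤ c · ∫₀^Z ∫_{−1}^{1} σ_t(z) v(z,μ)² dμ dz. -/

import Mathlib

open MeasureTheory

/-- positivity and boundedness of the scattering form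
`k(v,v) = (σ_s 𝒫 v, v)`: `0 ≤ k(v,v) ≤ c (σ_t v, v)`. -/
theorem stmt_13 (Z : ℝ) (hZ : 0 < Z) (σs σt : ℝ → ℝ)
    (hσs_meas : Measurable σs) (hσt_meas : Measurable σt)
    (hσt_bdd : ∃ M : ℝ, ∀ᵐ z ∂volume.restrict (Set.Ioo (0 : ℝ) Z), |σt z| ≤ M)
    (c : ℝ) (hc0 : 0 ≤ c)
    (hbd : ∀ᵐ z ∂volume.restrict (Set.Ioo (0 : ℝ) Z), 0 ≤ σs z ∧ σs z ≤ c * σt z)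
    (v : ℝ → ℝ → ℝ)
    (hv : MemLp (fun p : ℝ × ℝ => v p.1 p.2) 2
      ((volume.restrict (Set.Ioo (0 : ℝ) Z)).prod (volume.restrict (Set.Ioo (-1 : ℝ) 1)))) :
    0 ≤ (∫ z in Set.Ioo (0 : ℝ) Z, ∫ m in Set.Ioo (-1 : ℝ) 1,
        σs z * ((1 / 2) * ∫ m' in Set.Ioo (-1 : ℝ) 1, v z m') * v z m) ∧
    (∫ z in Set.Ioo (0 : ℝ) Z, ∫ m in Set.Ioo (-1 : ℝ) 1,
        σs z * ((1 / 2) * ∫ m' in Set.Ioo (-1 : ℝ) 1, v z m') * v z m) ≤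
      c * ∫ z in Set.Ioo (0 : ℝ) Z, ∫ m in Set.Ioo (-1 : ℝ) 1, σt z * v z m ^ 2 := by
  set μZ := volume.restrict (Set.Ioo (0 : ℝ) Z) with hμZ
  set μm := volume.restrict (Set.Ioo (-1 : ℝ) 1) with hμm
  haveI : IsFiniteMeasure μZ := ⟨by
    rw [hμZ, Measure.restrict_apply_univ, Real.volume_Ioo]; exact ENNReal.ofReal_lt_top⟩
  haveI : IsFiniteMeasure μm := ⟨by
    rw [hμm, Measure.restrict_apply_univ, Real.volume_Ioo]; exact ENNReal.ofReal_lt_top⟩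
  set I : ℝ → ℝ := fun z => ∫ m' in Set.Ioo (-1 : ℝ) 1, v z m' with hI
  set J : ℝ → ℝ := fun z => ∫ m in Set.Ioo (-1 : ℝ) 1, v z m ^ 2 with hJ
  have h1 : Integrable (fun p : ℝ × ℝ => v p.1 p.2) (μZ.prod μm) :=
    hv.integrable (by norm_num)
  have h2 : Integrable (fun p : ℝ × ℝ => v p.1 p.2 ^ 2) (μZ.prod μm) := hv.integrable_sq
  have hsec1 : ∀ᵐ z ∂μZ, Integrable (fun m => v z m) μm := h1.prod_right_ae
  have hsec2 : ∀ᵐ z ∂μZ, Integrable (fun m => v z m ^ 2) μm := h2.prod_right_ae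
  have hJint : Integrable J μZ := h2.integral_prod_left
  have hJ0 : ∀ z, 0 ≤ J z := fun z => integral_nonneg (fun m => sq_nonneg _)
  -- Cauchy–Schwarz on the angular variable
  have key : ∀ᵐ z ∂μZ, (1 / 2) * (I z) ^ 2 ≤ J z := by
    filter_upwards [hsec1, hsec2] with z h1z h2z
    have h0 : 0 ≤ ∫ m in Set.Ioo (-1 : ℝ) 1, (v z m - I z / 2) ^ 2 :=
      integral_nonneg fun m => sq_nonneg _
    have hexp : (∫ m in Set.Ioo (-1 : ℝ) 1, (v z m - I z / 2) ^ 2)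
        = J z - (I z) ^ 2 / 2 := by
      have heq : (fun m => (v z m - I z / 2) ^ 2)
          = fun m => v z m ^ 2 - (I z) * v z m + (I z / 2) ^ 2 := by
        funext m; ring
      rw [heq]
      rw [integral_add ((h2z.sub (h1z.const_mul (I z))).congr ?_) (integrable_const _),
        integral_sub h2z (h1z.const_mul (I z)), integral_const_mul, integral_const]
      · have : (μm Set.univ).toReal = 2 := by
          rw [hμm, Measure.restrict_apply_univ, Real.volume_Ioo]
          norm_num
        rw [hμm] at this ⊢
        rw [measureReal_def, this]
        simp only [smul_eq_mul]
        ring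
      · filter_upwards with m; simp [Pi.sub_apply]
    nlinarith [h0, hexp]
  have hImeas : AEStronglyMeasurable I μZ :=
    h1.aestronglyMeasurable.integral_prod_right'
  -- simplify inner integrals
  have hLHS : (∫ z in Set.Ioo (0 : ℝ) Z, ∫ m in Set.Ioo (-1 : ℝ) 1,
      σs z * ((1 / 2) * ∫ m' in Set.Ioo (-1 : ℝ) 1, v z m') * v z m)
      = ∫ z, σs z * ((1 / 2) * I z) * I z ∂μZ := by
    rw [hμZ]
    congr 1
    funext z
    rw [← hμm, integral_const_mul]
  have hRHS : (∫ z in Set.Ioo (0 : ℝ) Z, ∫ m in Set.Ioo (-1 : ℝ) 1, σt z * v z m ^ 2)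
      = ∫ z, σt z * J z ∂μZ := by
    rw [hμZ]
    congr 1
    funext z
    rw [← hμm, integral_const_mul]
  obtain ⟨M, hM⟩ := hσt_bdd
  have hGint : Integrable (fun z => σt z * J z) μZ :=
    hJint.bdd_mul (hσt_meas.aestronglyMeasurable) (by
      filter_upwards [hM] with z hz
      simpa [Real.norm_eq_abs] using hz)
  have hle : ∀ᵐ z ∂μZ, σs z * ((1 / 2) * I z) * I z ≤ c * (σt z * J z) := by
    filter_upwards [hbd, key] with z hzb hzk
    obtain ⟨hs0, hsle⟩ := hzb
    nlinarith [mul_le_mul_of_nonneg_right hsle (hJ0 z), mul_le_mul_of_nonneg_left hzk hs0]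
  have hnn : ∀ᵐ z ∂μZ, 0 ≤ σs z * ((1 / 2) * I z) * I z := by
    filter_upwards [hbd] with z hzb
    obtain ⟨hs0, _⟩ := hzb
    nlinarith [sq_nonneg (I z)]
  have hFmeas : AEStronglyMeasurable (fun z => σs z * ((1 / 2) * I z) * I z) μZ :=
    ((hσs_meas.aestronglyMeasurable.mul (hImeas.const_mul _)).mul hImeas)
  have hFint : Integrable (fun z => σs z * ((1 / 2) * I z) * I z) μZ := by
    refine Integrable.mono' (hGint.const_mul c) hFmeas ?_
    filter_upwards [hle, hnn] with z h1z h2z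
    rw [Real.norm_eq_abs, abs_of_nonneg h2z]
    exact h1z
  constructor
  · rw [hLHS]
    exact integral_nonneg_of_ae hnn
  · rw [hLHS, hRHS, ← integral_const_mul]
    exact integral_mono_ae hFint (hGint.const_mul c) hle
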